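/- Let K be a field of characteristic zero, R = K[x,y,z], and let a, b, c, α, β, γ be integers with 1 ≤ α ≤ a−1, 1 ≤ β ≤ b−1, 1 ≤ γ ≤ c−1 and α + γ = b. Let I = (x^a, y^b − x^α z^γ, z^c, x^{a−α} y^{b−β}, y^{b−β} z^{c−γ}) ⊆ R. If at least one of the integers a, b, c is equal to 2, then R/I has the weak Lefschetz property. -/

import Mathlib

open MvPolynomial

/-- The degree-`i` graded component of `R/I`, i.e. the image in `R/I` of the
space of homogeneous polynomials of degree `i`. -/
noncomputable def grComponent (K : Type*) [Field K]
    (I : Ideal (MvPolynomial (Fin 3) K)) (i : ℕ) :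
    Submodule K (MvPolynomial (Fin 3) K ⧸ I) :=
  (MvPolynomial.homogeneousSubmodule (Fin 3) K i).map
    (Ideal.Quotient.mkₐ K I).toLinearMap

/-- The Hilbert function of `R/I`. -/
noncomputable def hilb (K : Type*) [Field K]
    (I : Ideal (MvPolynomial (Fin 3) K)) (i : ℕ) : ℕ :=
  Module.finrank K (grComponent K I i)

/-- `R/I` has the weak Lefschetz property: there is a linear form `L` such that
for every `i`, multiplication by `L` from `[R/I]_i` to `[R/I]_{i+1}` is
injective or surjective. -/
def hasWLP (K : Type*) [Field K] (I : Ideal (MvPolynomial (Fin 3) K)) : Prop :=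
  ∃ L : MvPolynomial (Fin 3) K, L.IsHomogeneous 1 ∧
    ∀ i : ℕ,
      (∀ u ∈ grComponent K I i, ∀ v ∈ grComponent K I i,
          Ideal.Quotient.mk I L * u = Ideal.Quotient.mk I L * v → u = v) ∨
      (∀ w ∈ grComponent K I (i + 1), ∃ u ∈ grComponent K I i,
          Ideal.Quotient.mk I L * u = w)

namespace WLPAux

variable {K : Type*} [Field K]

noncomputable def fe (i j k : ℕ) : Fin 3 →₀ ℕ :=
  Finsupp.single 0 i + Finsupp.single 1 j + Finsupp.single 2 k

@[simp] lemma fe_apply0 (i j k : ℕ) : fe i j k 0 = i := by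
  simp [fe, Finsupp.single_apply]
@[simp] lemma fe_apply1 (i j k : ℕ) : fe i j k 1 = j := by
  simp [fe, Finsupp.single_apply]
@[simp] lemma fe_apply2 (i j k : ℕ) : fe i j k 2 = k := by
  simp [fe, Finsupp.single_apply]

lemma fe_eq_self (u : Fin 3 →₀ ℕ) : fe (u 0) (u 1) (u 2) = u := by
  ext x
  fin_cases x <;> simp [fe, Finsupp.single_apply]

lemma fe_add (i j k i' j' k' : ℕ) :
    fe i j k + fe i' j' k' = fe (i + i') (j + j') (k + k') := by
  ext x
  fin_cases x <;> simp [fe, Finsupp.single_apply]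

lemma fe_inj {i j k i' j' k' : ℕ} (h : fe i j k = fe i' j' k') :
    i = i' ∧ j = j' ∧ k = k' := by
  refine ⟨?_, ?_, ?_⟩
  · have := congrArg (fun u : Fin 3 →₀ ℕ => u 0) h; simpa using this
  · have := congrArg (fun u : Fin 3 →₀ ℕ => u 1) h; simpa using this
  · have := congrArg (fun u : Fin 3 →₀ ℕ => u 2) h; simpa using this

lemma deg3 (v : Fin 3 →₀ ℕ) : v.degree = v 0 + v 1 + v 2 := by
  rw [Finsupp.degree_apply]
  rw [Finset.sum_subset (Finset.subset_univ _)
    (fun x _ hx => Finsupp.notMem_support_iff.mp hx)]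
  simp [Fin.sum_univ_three]

noncomputable def Mo (i j k : ℕ) : MvPolynomial (Fin 3) K := monomial (fe i j k) 1

lemma Mo_eq (i j k : ℕ) :
    (Mo i j k : MvPolynomial (Fin 3) K) = X 0 ^ i * X 1 ^ j * X 2 ^ k := by
  simp [Mo, fe, X_pow_eq_monomial, monomial_mul]

lemma Mo_mul (i j k i' j' k' : ℕ) :
    (Mo i j k : MvPolynomial (Fin 3) K) * Mo i' j' k' = Mo (i + i') (j + j') (k + k') := by
  simp [Mo, monomial_mul, fe_add]

lemma Mo_homog {i j k n : ℕ} (h : i + j + k = n) :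
    (Mo i j k : MvPolynomial (Fin 3) K).IsHomogeneous n :=
  isHomogeneous_monomial _ (by rw [deg3]; simpa using h)

lemma coeff_Mo (u : Fin 3 →₀ ℕ) (i j k : ℕ) :
    coeff u (Mo i j k : MvPolynomial (Fin 3) K) = if fe i j k = u then 1 else 0 :=
  coeff_monomial _ _ _

lemma monomial_eq_smul_Mo (v : Fin 3 →₀ ℕ) (c : K) :
    monomial v c = c • (Mo (v 0) (v 1) (v 2) : MvPolynomial (Fin 3) K) := by
  rw [Mo, fe_eq_self, smul_monomial, smul_eq_mul, mul_one]

lemma degree_of_mem_support {f : MvPolynomial (Fin 3) K} {n : ℕ}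
    (hf : f.IsHomogeneous n) {v : Fin 3 →₀ ℕ} (hv : v ∈ f.support) :
    v 0 + v 1 + v 2 = n := by
  rw [← deg3, Finsupp.degree_eq_weight_one]
  exact hf (mem_support_iff.mp hv)

/-! glue -/

lemma mem_grComponent_iff {I : Ideal (MvPolynomial (Fin 3) K)} {n : ℕ}
    {u : MvPolynomial (Fin 3) K ⧸ I} :
    u ∈ grComponent K I n ↔
      ∃ f : MvPolynomial (Fin 3) K, f.IsHomogeneous n ∧ Ideal.Quotient.mk I f = u := by
  simp only [grComponent, Submodule.mem_map, mem_homogeneousSubmodule,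
    AlgHom.toLinearMap_apply, Ideal.Quotient.mkₐ_eq_mk]

lemma inj_branch {I : Ideal (MvPolynomial (Fin 3) K)} {L : MvPolynomial (Fin 3) K} {n : ℕ}
    (h : ∀ f : MvPolynomial (Fin 3) K, f.IsHomogeneous n → L * f ∈ I → f ∈ I) :
    ∀ u ∈ grComponent K I n, ∀ v ∈ grComponent K I n,
      Ideal.Quotient.mk I L * u = Ideal.Quotient.mk I L * v → u = v := by
  intro u hu v hv he
  rw [mem_grComponent_iff] at hu hv
  obtain ⟨f, hf, rfl⟩ := hu
  obtain ⟨g, hg, rfl⟩ := hv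
  rw [← map_mul, ← map_mul, Ideal.Quotient.mk_eq_mk_iff_sub_mem] at he
  have hm : L * (f - g) ∈ I := by rw [mul_sub]; exact he
  have := h _ (hf.sub hg) hm
  rw [Ideal.Quotient.mk_eq_mk_iff_sub_mem]
  exact this

lemma smul_mem_ideal {I : Ideal (MvPolynomial (Fin 3) K)} (c : K)
    {p : MvPolynomial (Fin 3) K} (hp : p ∈ I) : c • p ∈ I := by
  rw [MvPolynomial.smul_eq_C_mul]
  exact I.mul_mem_left _ hp

lemma surj_branch {I : Ideal (MvPolynomial (Fin 3) K)} {L : MvPolynomial (Fin 3) K} {n : ℕ}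
    (h : ∀ i j k : ℕ, i + j + k = n + 1 →
      ∃ q : MvPolynomial (Fin 3) K, q.IsHomogeneous n ∧ Mo i j k - L * q ∈ I) :
    ∀ w ∈ grComponent K I (n + 1), ∃ u ∈ grComponent K I n,
      Ideal.Quotient.mk I L * u = w := by
  intro w hw
  rw [mem_grComponent_iff] at hw
  obtain ⟨f, hf, rfl⟩ := hw
  have key : ∀ v : Fin 3 →₀ ℕ, ∃ q : MvPolynomial (Fin 3) K, q.IsHomogeneous n ∧
      (v ∈ f.support → monomial v (coeff v f) - L * (coeff v f • q) ∈ I) := by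
    intro v
    by_cases hv : v ∈ f.support
    · obtain ⟨q, hq1, hq2⟩ := h (v 0) (v 1) (v 2) (degree_of_mem_support hf hv)
      refine ⟨q, hq1, fun _ => ?_⟩
      rw [monomial_eq_smul_Mo, mul_smul_comm, ← smul_sub]
      exact smul_mem_ideal _ hq2
    · exact ⟨0, isHomogeneous_zero _ _ _, fun hc => absurd hc hv⟩
  choose q hq1 hq2 using key
  refine ⟨Ideal.Quotient.mk I (∑ v ∈ f.support, coeff v f • q v), ?_, ?_⟩
  · rw [mem_grComponent_iff]
    refine ⟨_, IsHomogeneous.sum _ _ _ (fun v _ => ?_), rfl⟩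
    rw [MvPolynomial.smul_eq_C_mul]
    simpa using (isHomogeneous_C _ _).mul (hq1 v)
  · rw [← map_mul, Ideal.Quotient.mk_eq_mk_iff_sub_mem]
    have hrep : L * (∑ v ∈ f.support, coeff v f • q v) - f
        = -(∑ v ∈ f.support, (monomial v (coeff v f) - L * (coeff v f • q v))) := by
      rw [Finset.sum_sub_distrib]
      rw [support_sum_monomial_coeff f]
      rw [Finset.mul_sum]
      ring
    rw [hrep]
    exact neg_mem (Submodule.sum_mem _ (fun v hv => hq2 v hv))


/-! ### Generic normal-form layer -/

noncomputable def NFgen (nf : ℕ → ℕ → ℕ → MvPolynomial (Fin 3) K) :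
    MvPolynomial (Fin 3) K →ₗ[K] MvPolynomial (Fin 3) K :=
  (basisMonomials (Fin 3) K).constr K fun v => nf (v 0) (v 1) (v 2)

lemma basisMonomials_apply (v : Fin 3 →₀ ℕ) :
    (basisMonomials (Fin 3) K) v = monomial v 1 :=
  congrFun (coe_basisMonomials (Fin 3) K) v

lemma NFgen_monomial (nf : ℕ → ℕ → ℕ → MvPolynomial (Fin 3) K) (v : Fin 3 →₀ ℕ) (c : K) :
    NFgen nf (monomial v c) = c • nf (v 0) (v 1) (v 2) := by
  have h1 : (monomial v c : MvPolynomial (Fin 3) K) = c • (basisMonomials (Fin 3) K) v := by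
    rw [basisMonomials_apply, smul_monomial, smul_eq_mul, mul_one]
  rw [h1, map_smul, NFgen, Module.Basis.constr_basis]

lemma NFgen_Mo (nf : ℕ → ℕ → ℕ → MvPolynomial (Fin 3) K) (i j k : ℕ) :
    NFgen nf (Mo i j k) = nf i j k := by
  rw [Mo, NFgen_monomial]
  simp

lemma NFgen_expand (nf : ℕ → ℕ → ℕ → MvPolynomial (Fin 3) K) (f : MvPolynomial (Fin 3) K) :
    NFgen nf f = ∑ v ∈ f.support, coeff v f • nf (v 0) (v 1) (v 2) := by
  conv_lhs => rw [← support_sum_monomial_coeff f]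
  rw [map_sum]
  exact Finset.sum_congr rfl fun v _ => NFgen_monomial nf v _

/-- support control for `NFgen` -/
lemma NFgen_support {nf : ℕ → ℕ → ℕ → MvPolynomial (Fin 3) K} {std : ℕ → ℕ → ℕ → Prop}
    (hspec : ∀ i j k, nf i j k = 0 ∨
      ∃ i' j' k', std i' j' k' ∧ i' + j' + k' = i + j + k ∧ nf i j k = Mo i' j' k')
    {f : MvPolynomial (Fin 3) K} {d : ℕ} (hf : f.IsHomogeneous d) :
    ∀ v ∈ (NFgen nf f).support, std (v 0) (v 1) (v 2) ∧ v 0 + v 1 + v 2 = d := by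
  intro v hv
  have hne : coeff v (NFgen nf f) ≠ 0 := mem_support_iff.mp hv
  rw [NFgen_expand, coeff_sum] at hne
  obtain ⟨u, hu, hcu⟩ := Finset.exists_ne_zero_of_sum_ne_zero hne
  rw [coeff_smul] at hcu
  have hnf : coeff v (nf (u 0) (u 1) (u 2)) ≠ 0 := fun h0 => hcu (by rw [h0, smul_zero])
  rcases hspec (u 0) (u 1) (u 2) with h0 | ⟨i', j', k', hstd, hdeg, heq⟩
  · rw [h0] at hnf; simp at hnf
  · rw [heq, coeff_Mo] at hnf
    have hfe : fe i' j' k' = v := by by_contra hne'; rw [if_neg hne'] at hnf; exact hnf rfl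
    have h0 := congrArg (fun w : Fin 3 →₀ ℕ => w 0) hfe
    have h1 := congrArg (fun w : Fin 3 →₀ ℕ => w 1) hfe
    have h2 := congrArg (fun w : Fin 3 →₀ ℕ => w 2) hfe
    simp only [fe_apply0, fe_apply1, fe_apply2] at h0 h1 h2
    have hud := degree_of_mem_support hf hu
    refine ⟨?_, ?_⟩
    · rw [← h0, ← h1, ← h2]; exact hstd
    · omega

lemma NFgen_sub_self_mem {nf : ℕ → ℕ → ℕ → MvPolynomial (Fin 3) K}
    {I : Ideal (MvPolynomial (Fin 3) K)}
    (hmem : ∀ i j k, Mo i j k - nf i j k ∈ I) (f : MvPolynomial (Fin 3) K) :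
    f - NFgen nf f ∈ I := by
  have : f - NFgen nf f
      = ∑ v ∈ f.support, coeff v f • (Mo (v 0) (v 1) (v 2) - nf (v 0) (v 1) (v 2)) := by
    nth_rewrite 1 [← support_sum_monomial_coeff f]
    rw [NFgen_expand, ← Finset.sum_sub_distrib]
    refine Finset.sum_congr rfl fun v _ => ?_
    rw [monomial_eq_smul_Mo, ← smul_sub]
  rw [this]
  exact Submodule.sum_mem _ fun v _ => smul_mem_ideal _ (hmem _ _ _)

/-! ### Case A :  b = 2, `I = (x^a, y^2 - xz, z^c, x^(a-1) y, y z^(c-1))`, with `2 ≤ a ≤ c`. -/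

section CaseA

variable (a c : ℕ)

noncomputable def IA : Ideal (MvPolynomial (Fin 3) K) :=
  Ideal.span {Mo a 0 0, Mo 0 2 0 - Mo 1 0 1, Mo 0 0 c, Mo (a-1) 1 0, Mo 0 1 (c-1)}

noncomputable def nfA (i j k : ℕ) : MvPolynomial (Fin 3) K :=
  if j % 2 = 0 then
    (if a ≤ i + j / 2 ∨ c ≤ k + j / 2 then 0 else Mo (i + j / 2) 0 (k + j / 2))
  else
    (if a - 1 ≤ i + j / 2 ∨ c - 1 ≤ k + j / 2 then 0 else Mo (i + j / 2) 1 (k + j / 2))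

def stdA (i j k : ℕ) : Prop :=
  (j = 0 ∧ i < a ∧ k < c) ∨ (j = 1 ∧ i + 1 < a ∧ k + 1 < c)

variable {a c}

lemma Mo_dvd_mem {i j k i' j' k' : ℕ} (h1 : i' ≤ i) (h2 : j' ≤ j) (h3 : k' ≤ k)
    {I : Ideal (MvPolynomial (Fin 3) K)} (hg : (Mo i' j' k' : MvPolynomial (Fin 3) K) ∈ I) :
    (Mo i j k : MvPolynomial (Fin 3) K) ∈ I := by
  have hm := Mo_mul (K := K) (i - i') (j - j') (k - k') i' j' k'
  rw [show i - i' + i' = i by omega, show j - j' + j' = j by omega,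
    show k - k' + k' = k by omega] at hm
  rw [← hm]
  exact I.mul_mem_left _ hg

lemma gA1_mem : (Mo a 0 0 : MvPolynomial (Fin 3) K) ∈ IA a c :=
  Ideal.subset_span (by simp)
lemma gA2_mem : (Mo 0 2 0 - Mo 1 0 1 : MvPolynomial (Fin 3) K) ∈ IA a c :=
  Ideal.subset_span (by simp)
lemma gA3_mem : (Mo 0 0 c : MvPolynomial (Fin 3) K) ∈ IA a c :=
  Ideal.subset_span (by simp)
lemma gA4_mem : (Mo (a-1) 1 0 : MvPolynomial (Fin 3) K) ∈ IA a c :=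
  Ideal.subset_span (by simp)
lemma gA5_mem : (Mo 0 1 (c-1) : MvPolynomial (Fin 3) K) ∈ IA a c :=
  Ideal.subset_span (by simp)

/-- killed monomials (with `j ≤ 1`) lie in the ideal -/
lemma killA_mem {i j k : ℕ} (hj : j ≤ 1)
    (hkill : (j = 0 ∧ (a ≤ i ∨ c ≤ k)) ∨ (j = 1 ∧ (a - 1 ≤ i ∨ c - 1 ≤ k))) :
    (Mo i j k : MvPolynomial (Fin 3) K) ∈ IA a c := by
  rcases hkill with ⟨rfl, h | h⟩ | ⟨rfl, h | h⟩
  · exact Mo_dvd_mem h le_rfl (Nat.zero_le _) gA1_mem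
  · exact Mo_dvd_mem (Nat.zero_le _) le_rfl h gA3_mem
  · exact Mo_dvd_mem h le_rfl (Nat.zero_le _) gA4_mem
  · exact Mo_dvd_mem (Nat.zero_le _) le_rfl h gA5_mem

lemma nfA_spec (i j k : ℕ) : nfA a c i j k = (0 : MvPolynomial (Fin 3) K) ∨
    ∃ i' j' k', stdA a c i' j' k' ∧ i' + j' + k' = i + j + k ∧ nfA a c i j k = (Mo i' j' k' : MvPolynomial (Fin 3) K) := by
  unfold nfA
  split_ifs with h1 h2 h3
  · exact Or.inl rfl
  · refine Or.inr ⟨i + j / 2, 0, k + j / 2, Or.inl ⟨rfl, by omega, by omega⟩, by omega, rfl⟩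
  · exact Or.inl rfl
  · refine Or.inr ⟨i + j / 2, 1, k + j / 2, Or.inr ⟨rfl, by omega, by omega⟩, by omega, rfl⟩

lemma nfA_std {i j k : ℕ} (h : stdA a c i j k) :
    nfA a c i j k = (Mo i j k : MvPolynomial (Fin 3) K) := by
  rcases h with ⟨rfl, h1, h2⟩ | ⟨rfl, h1, h2⟩ <;> unfold nfA
  · rw [if_pos (by omega), if_neg (by omega)]; norm_num
  · rw [if_neg (by omega), if_neg (by omega)]; norm_num

lemma nfA_step (i j k : ℕ) :
    nfA a c i (j+2) k = (nfA a c (i+1) j (k+1) : MvPolynomial (Fin 3) K) := by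
  unfold nfA
  rw [show (j+2) % 2 = j % 2 by omega, show (j+2)/2 = j/2 + 1 by omega,
    show i + (j/2 + 1) = i + 1 + j/2 by omega, show k + (j/2 + 1) = k + 1 + j/2 by omega]

lemma Mo_sub_nfA_mem (i j k : ℕ) :
    (Mo i j k : MvPolynomial (Fin 3) K) - nfA a c i j k ∈ IA a c := by
  induction j using Nat.strong_induction_on generalizing i k with
  | _ j ih =>
  rcases lt_or_ge j 2 with hj | hj
  · interval_cases j
    · by_cases hkill : a ≤ i ∨ c ≤ k
      · have h0 : nfA a c i 0 k = (0 : MvPolynomial (Fin 3) K) := by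
          unfold nfA
          rw [if_pos (by omega), if_pos (by simpa using hkill)]
        rw [h0, sub_zero]
        exact killA_mem (by omega) (Or.inl ⟨rfl, hkill⟩)
      · rw [nfA_std (Or.inl ⟨rfl, by omega, by omega⟩), sub_self]
        exact zero_mem _
    · by_cases hkill : a - 1 ≤ i ∨ c - 1 ≤ k
      · have h0 : nfA a c i 1 k = (0 : MvPolynomial (Fin 3) K) := by
          unfold nfA
          rw [if_neg (by omega), if_pos (by simpa using hkill)]
        rw [h0, sub_zero]
        exact killA_mem le_rfl (Or.inr ⟨rfl, hkill⟩)
      · rw [nfA_std (Or.inr ⟨rfl, by omega, by omega⟩), sub_self]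
        exact zero_mem _
  · obtain ⟨j', rfl⟩ : ∃ j', j = j' + 2 := ⟨j - 2, by omega⟩
    have hid : (Mo i (j'+2) k : MvPolynomial (Fin 3) K) - nfA a c i (j'+2) k
        = Mo i j' k * (Mo 0 2 0 - Mo 1 0 1)
          + (Mo (i+1) j' (k+1) - nfA a c (i+1) j' (k+1)) := by
      rw [nfA_step, mul_sub, Mo_mul, Mo_mul]
      simp only [add_zero]
      ring
    rw [hid]
    exact add_mem (Ideal.mul_mem_left _ _ gA2_mem) (ih j' (by omega) (i+1) (k+1))

lemma NFgen_mul_right_zero (nf : ℕ → ℕ → ℕ → MvPolynomial (Fin 3) K)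
    (g : MvPolynomial (Fin 3) K) (hg : ∀ i j k : ℕ, NFgen nf (Mo i j k * g) = 0)
    (r : MvPolynomial (Fin 3) K) : NFgen nf (r * g) = 0 := by
  have hc : (NFgen nf).comp (LinearMap.mulRight K g) = 0 := by
    apply (basisMonomials (Fin 3) K).ext
    intro v
    simp only [LinearMap.comp_apply, LinearMap.mulRight_apply, LinearMap.zero_apply]
    rw [basisMonomials_apply]
    have h1 : (monomial v (1:K)) = Mo (v 0) (v 1) (v 2) := by rw [Mo, fe_eq_self]
    rw [h1]
    exact hg _ _ _
  have := LinearMap.ext_iff.mp hc r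
  simpa using this

lemma NFA_g1 (i j k : ℕ) : NFgen (nfA a c) ((Mo i j k : MvPolynomial (Fin 3) K) * Mo a 0 0) = 0 := by
  rw [Mo_mul, NFgen_Mo]
  simp only [add_zero]
  unfold nfA
  split_ifs <;> first | rfl | (exfalso; omega)

lemma NFA_g2 (i j k : ℕ) :
    NFgen (nfA a c) ((Mo i j k : MvPolynomial (Fin 3) K) * (Mo 0 2 0 - Mo 1 0 1)) = 0 := by
  rw [mul_sub, map_sub, Mo_mul, Mo_mul, NFgen_Mo, NFgen_Mo]
  simp only [add_zero]
  rw [nfA_step, sub_self]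

lemma NFA_g3 (i j k : ℕ) : NFgen (nfA a c) ((Mo i j k : MvPolynomial (Fin 3) K) * Mo 0 0 c) = 0 := by
  rw [Mo_mul, NFgen_Mo]
  simp only [add_zero]
  unfold nfA
  split_ifs <;> first | rfl | (exfalso; omega)

lemma NFA_g4 (i j k : ℕ) :
    NFgen (nfA a c) ((Mo i j k : MvPolynomial (Fin 3) K) * Mo (a-1) 1 0) = 0 := by
  rw [Mo_mul, NFgen_Mo]
  simp only [add_zero]
  unfold nfA
  split_ifs <;> first | rfl | (exfalso; omega)

lemma NFA_g5 (i j k : ℕ) :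
    NFgen (nfA a c) ((Mo i j k : MvPolynomial (Fin 3) K) * Mo 0 1 (c-1)) = 0 := by
  rw [Mo_mul, NFgen_Mo]
  simp only [add_zero]
  unfold nfA
  split_ifs <;> first | rfl | (exfalso; omega)

lemma NFA_kills {p : MvPolynomial (Fin 3) K} (hp : p ∈ IA a c) : NFgen (nfA a c) p = 0 := by
  unfold IA at hp
  obtain ⟨r1, z1, hz1, rfl⟩ := Ideal.mem_span_insert.mp hp
  obtain ⟨r2, z2, hz2, rfl⟩ := Ideal.mem_span_insert.mp hz1
  obtain ⟨r3, z3, hz3, rfl⟩ := Ideal.mem_span_insert.mp hz2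
  obtain ⟨r4, z4, hz4, rfl⟩ := Ideal.mem_span_insert.mp hz3
  obtain ⟨r5, rfl⟩ := Ideal.mem_span_singleton'.mp hz4
  simp only [map_add]
  rw [NFgen_mul_right_zero _ _ (NFA_g1) r1, NFgen_mul_right_zero _ _ (NFA_g2) r2,
    NFgen_mul_right_zero _ _ (NFA_g3) r3, NFgen_mul_right_zero _ _ (NFA_g4) r4,
    NFgen_mul_right_zero _ _ (NFA_g5) r5]
  simp

lemma L_mul_Mo_A (i j k : ℕ) :
    (X 0 + X 2 : MvPolynomial (Fin 3) K) * Mo i j k = Mo (i+1) j k + Mo i j (k+1) := by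
  have hx : (X 0 : MvPolynomial (Fin 3) K) = Mo 1 0 0 := by rw [Mo_eq]; simp
  have hz : (X 2 : MvPolynomial (Fin 3) K) = Mo 0 0 1 := by rw [Mo_eq]; simp
  rw [add_mul, mul_comm (X 0) (Mo i j k), mul_comm (X 2) (Mo i j k), hx, hz, Mo_mul, Mo_mul]
  simp only [add_zero]

lemma injA_mono (ha : 2 ≤ a) (hac : a ≤ c) {d : ℕ} (hd : d + 2 ≤ a) {i j k : ℕ}
    (hstd : stdA a c i j k) (hdeg : i + j + k = d) (cc : K) :
    NFgen (nfA a c) ((X 0 + X 2) * monomial (fe i j k) cc)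
      = (X 0 + X 2) * monomial (fe i j k) cc := by
  have hup1 : stdA a c (i+1) j k := by
    rcases hstd with ⟨rfl, h1, h2⟩ | ⟨rfl, h1, h2⟩
    · exact Or.inl ⟨rfl, by omega, by omega⟩
    · exact Or.inr ⟨rfl, by omega, by omega⟩
  have hup2 : stdA a c i j (k+1) := by
    rcases hstd with ⟨rfl, h1, h2⟩ | ⟨rfl, h1, h2⟩
    · exact Or.inl ⟨rfl, by omega, by omega⟩
    · exact Or.inr ⟨rfl, by omega, by omega⟩
  have hmo : (monomial (fe i j k) cc : MvPolynomial (Fin 3) K) = cc • Mo i j k := by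
    rw [Mo, smul_monomial, smul_eq_mul, mul_one]
  rw [hmo, mul_smul_comm, map_smul, L_mul_Mo_A, map_add, NFgen_Mo, NFgen_Mo,
    nfA_std hup1, nfA_std hup2]

lemma injA (ha : 2 ≤ a) (hc : 2 ≤ c) (hac : a ≤ c) {d : ℕ} (hd : d + 2 ≤ a) :
    ∀ f : MvPolynomial (Fin 3) K, f.IsHomogeneous d → (X 0 + X 2) * f ∈ IA a c → f ∈ IA a c := by
  intro f hf hLf
  set h := NFgen (nfA a c) f with hh
  have hfh : f - h ∈ IA a c := NFgen_sub_self_mem (fun i j k => Mo_sub_nfA_mem i j k) f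
  have hLh : (X 0 + X 2) * h ∈ IA a c := by
    have heq : (X 0 + X 2) * h = (X 0 + X 2) * f - (X 0 + X 2) * (f - h) := by ring
    rw [heq]
    exact sub_mem hLf (Ideal.mul_mem_left _ _ hfh)
  have hsup := NFgen_support (nfA_spec (a := a) (c := c)) hf
  have hfix : NFgen (nfA a c) ((X 0 + X 2) * h) = (X 0 + X 2) * h := by
    have hexp : (X 0 + X 2) * h = ∑ v ∈ h.support, (X 0 + X 2) * monomial v (coeff v h) := by
      rw [← Finset.mul_sum, support_sum_monomial_coeff]
    rw [hexp, map_sum]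
    refine Finset.sum_congr rfl fun v hv => ?_
    obtain ⟨hstd, hdeg⟩ := hsup v hv
    have h1 : (monomial v (coeff v h) : MvPolynomial (Fin 3) K)
        = monomial (fe (v 0) (v 1) (v 2)) (coeff v h) := by rw [fe_eq_self]
    rw [h1]
    exact injA_mono ha hac hd hstd hdeg _
  have hzero : (X 0 + X 2) * h = 0 := by rw [← hfix]; exact NFA_kills hLh
  have hL : (X 0 + X 2 : MvPolynomial (Fin 3) K) ≠ 0 := fun h0 => by
    simpa using congrArg (eval fun i : Fin 3 => if i = 0 then (1:K) else 0) h0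
  have h0 : h = 0 := by
    rcases mul_eq_zero.mp hzero with h' | h'
    · exact absurd h' hL
    · exact h'
  have := hfh
  rw [h0, sub_zero] at this
  exact this

lemma surjA_eps (ha : 2 ≤ a) {e : ℕ} (he : a ≤ e) :
    ∀ k i j : ℕ, j ≤ 1 → i + j + k = e →
      ∃ q : MvPolynomial (Fin 3) K, q.IsHomogeneous (e-1) ∧
        Mo i j k - (X 0 + X 2) * q ∈ IA a c := by
  intro k
  induction k using Nat.strong_induction_on with
  | _ k ih =>
  intro i j hj hdeg
  by_cases hkill : (j = 0 ∧ (a ≤ i ∨ c ≤ k)) ∨ (j = 1 ∧ (a - 1 ≤ i ∨ c - 1 ≤ k))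
  · exact ⟨0, isHomogeneous_zero _ _ _, by rw [mul_zero, sub_zero]; exact killA_mem hj hkill⟩
  · obtain ⟨k', rfl⟩ : ∃ k', k = k' + 1 := ⟨k - 1, by omega⟩
    obtain ⟨q', hq1, hq2⟩ := ih k' (by omega) (i+1) j hj (by omega)
    refine ⟨Mo i j k' - q', (Mo_homog (by omega)).sub hq1, ?_⟩
    have heq : (Mo i j (k'+1) : MvPolynomial (Fin 3) K) - (X 0 + X 2) * (Mo i j k' - q')
        = -(Mo (i+1) j k' - (X 0 + X 2) * q') := by
      rw [mul_sub, L_mul_Mo_A]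
      ring
    rw [heq]
    exact neg_mem hq2

lemma surjA (ha : 2 ≤ a) {e : ℕ} (he : a ≤ e) :
    ∀ j i k : ℕ, i + j + k = e →
      ∃ q : MvPolynomial (Fin 3) K, q.IsHomogeneous (e-1) ∧
        Mo i j k - (X 0 + X 2) * q ∈ IA a c := by
  intro j
  induction j using Nat.strong_induction_on with
  | _ j ih =>
  intro i k hdeg
  rcases lt_or_ge j 2 with hj | hj
  · exact surjA_eps ha he k i j (by omega) hdeg
  · obtain ⟨j', rfl⟩ : ∃ j', j = j' + 2 := ⟨j - 2, by omega⟩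
    obtain ⟨q', hq1, hq2⟩ := ih j' (by omega) (i+1) (k+1) (by omega)
    refine ⟨q', hq1, ?_⟩
    have heq : (Mo i (j'+2) k : MvPolynomial (Fin 3) K) - (X 0 + X 2) * q'
        = Mo i j' k * (Mo 0 2 0 - Mo 1 0 1) + (Mo (i+1) j' (k+1) - (X 0 + X 2) * q') := by
      rw [mul_sub, Mo_mul, Mo_mul]
      simp only [add_zero]
      ring
    rw [heq]
    exact add_mem (Ideal.mul_mem_left _ _ gA2_mem) hq2

lemma caseA (ha : 2 ≤ a) (hc : 2 ≤ c) (hac : a ≤ c) : hasWLP K (IA a c) := by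
  refine ⟨X 0 + X 2, (isHomogeneous_X _ _).add (isHomogeneous_X _ _), fun n => ?_⟩
  by_cases hn : n + 2 ≤ a
  · exact Or.inl (inj_branch (injA ha hc hac hn))
  · refine Or.inr (surj_branch fun i j k hd => ?_)
    obtain ⟨q, h1, h2⟩ := surjA (K := K) (a := a) (c := c) ha (e := n+1) (by omega) j i k (by omega)
    exact ⟨q, by simpa using h1, h2⟩

end CaseA

/-! ### Case B : a = 2, `I = (x^2, y^b - x z^(b-1), z^c, x y^t, y^t z^(c-b+1))`,
  with `2 ≤ b ≤ c`, `1 ≤ t < b`  (here `t = b - β`). -/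

section CaseB

variable (b c t : ℕ)

noncomputable def IB : Ideal (MvPolynomial (Fin 3) K) :=
  Ideal.span {Mo 2 0 0, Mo 0 b 0 - Mo 1 0 (b-1), Mo 0 0 c, Mo 1 t 0, Mo 0 t (c-b+1)}

noncomputable def nfB (i j k : ℕ) : MvPolynomial (Fin 3) K :=
  if 2 ≤ i then 0
  else if i = 1 then (if t ≤ j ∨ c ≤ k then 0 else Mo 1 j k)
  else if b ≤ j then
    (if t ≤ j - b ∨ c ≤ k + (b-1) then 0 else Mo 1 (j-b) (k + (b-1)))
  else if c ≤ k ∨ (t ≤ j ∧ c - b + 1 ≤ k) then 0 else Mo 0 j k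

def stdB (i j k : ℕ) : Prop :=
  (i = 0 ∧ j < b ∧ k < c ∧ ¬(t ≤ j ∧ c - b + 1 ≤ k)) ∨ (i = 1 ∧ j < t ∧ k < c)

variable {b c t}

lemma gB1_mem : (Mo 2 0 0 : MvPolynomial (Fin 3) K) ∈ IB b c t :=
  Ideal.subset_span (by simp)
lemma gB2_mem : (Mo 0 b 0 - Mo 1 0 (b-1) : MvPolynomial (Fin 3) K) ∈ IB b c t :=
  Ideal.subset_span (by simp)
lemma gB3_mem : (Mo 0 0 c : MvPolynomial (Fin 3) K) ∈ IB b c t :=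
  Ideal.subset_span (by simp)
lemma gB4_mem : (Mo 1 t 0 : MvPolynomial (Fin 3) K) ∈ IB b c t :=
  Ideal.subset_span (by simp)
lemma gB5_mem : (Mo 0 t (c-b+1) : MvPolynomial (Fin 3) K) ∈ IB b c t :=
  Ideal.subset_span (by simp)

lemma killB_x2 {i j k : ℕ} (h : 2 ≤ i) : (Mo i j k : MvPolynomial (Fin 3) K) ∈ IB b c t :=
  Mo_dvd_mem h (Nat.zero_le _) (Nat.zero_le _) gB1_mem
lemma killB_zc {i j k : ℕ} (h : c ≤ k) : (Mo i j k : MvPolynomial (Fin 3) K) ∈ IB b c t :=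
  Mo_dvd_mem (Nat.zero_le _) (Nat.zero_le _) h gB3_mem
lemma killB_xy {j k : ℕ} (h : t ≤ j) : (Mo 1 j k : MvPolynomial (Fin 3) K) ∈ IB b c t :=
  Mo_dvd_mem le_rfl h (Nat.zero_le _) gB4_mem
lemma killB_yz {i j k : ℕ} (h1 : t ≤ j) (h2 : c - b + 1 ≤ k) :
    (Mo i j k : MvPolynomial (Fin 3) K) ∈ IB b c t :=
  Mo_dvd_mem (Nat.zero_le _) h1 h2 gB5_mem

lemma nfB_spec (hb : 2 ≤ b) (i j k : ℕ) : nfB b c t i j k = (0 : MvPolynomial (Fin 3) K) ∨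
    ∃ i' j' k', stdB b c t i' j' k' ∧ i' + j' + k' = i + j + k ∧
      nfB b c t i j k = (Mo i' j' k' : MvPolynomial (Fin 3) K) := by
  unfold nfB
  split_ifs with h1 h2 h3 h4 h5 h6
  · exact Or.inl rfl
  · exact Or.inl rfl
  · exact Or.inr ⟨1, j, k, Or.inr ⟨rfl, by omega, by omega⟩, by omega, rfl⟩
  · exact Or.inl rfl
  · exact Or.inr ⟨1, j - b, k + (b-1), Or.inr ⟨rfl, by omega, by omega⟩, by omega, rfl⟩
  · exact Or.inl rfl
  · exact Or.inr ⟨0, j, k, Or.inl ⟨rfl, by omega, by omega, by omega⟩, by omega, rfl⟩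

lemma nfB_std {i j k : ℕ} (h : stdB b c t i j k) :
    nfB b c t i j k = (Mo i j k : MvPolynomial (Fin 3) K) := by
  rcases h with ⟨rfl, h1, h2, h3⟩ | ⟨rfl, h1, h2⟩ <;> unfold nfB <;>
    split_ifs <;> first | rfl | (exact (‹False›).elim) | (exfalso; omega)

lemma gB2_identity (j' k : ℕ) (hb : 1 ≤ b) :
    (Mo 0 j' k : MvPolynomial (Fin 3) K) * (Mo 0 b 0 - Mo 1 0 (b-1))
      = Mo 0 (j' + b) k - Mo 1 j' (k + (b-1)) := by
  rw [mul_sub, Mo_mul, Mo_mul]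
  simp only [add_zero, zero_add]

lemma Mo_sub_nfB_mem (hb : 2 ≤ b) (i j k : ℕ) :
    (Mo i j k : MvPolynomial (Fin 3) K) - nfB b c t i j k ∈ IB b c t := by
  by_cases h1 : 2 ≤ i
  · rw [show nfB b c t i j k = (0 : MvPolynomial (Fin 3) K) by unfold nfB; rw [if_pos h1],
      sub_zero]
    exact killB_x2 h1
  by_cases h2 : i = 1
  · subst h2
    by_cases h3 : t ≤ j ∨ c ≤ k
    · rw [show nfB b c t 1 j k = (0 : MvPolynomial (Fin 3) K) by
        unfold nfB; rw [if_neg h1, if_pos rfl, if_pos h3], sub_zero]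
      rcases h3 with h3 | h3
      · exact killB_xy h3
      · exact killB_zc h3
    · rw [nfB_std (Or.inr ⟨rfl, by omega, by omega⟩), sub_self]
      exact zero_mem _
  have hi0 : i = 0 := by omega
  subst hi0
  by_cases h3 : b ≤ j
  · have hkey : (Mo 0 j k : MvPolynomial (Fin 3) K) - Mo 1 (j-b) (k + (b-1))
        = Mo 0 (j-b) k * (Mo 0 b 0 - Mo 1 0 (b-1)) := by
      rw [gB2_identity _ _ (by omega), show j - b + b = j by omega]
    by_cases h4 : t ≤ j - b ∨ c ≤ k + (b-1)
    · rw [show nfB b c t 0 j k = (0 : MvPolynomial (Fin 3) K) by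
        unfold nfB; rw [if_neg h1, if_neg h2, if_pos h3, if_pos h4], sub_zero]
      have hmem2 : (Mo 1 (j-b) (k + (b-1)) : MvPolynomial (Fin 3) K) ∈ IB b c t := by
        rcases h4 with h4 | h4
        · exact killB_xy h4
        · exact killB_zc h4
      have : (Mo 0 j k : MvPolynomial (Fin 3) K)
          = Mo 0 (j-b) k * (Mo 0 b 0 - Mo 1 0 (b-1)) + Mo 1 (j-b) (k + (b-1)) := by
        rw [← hkey]; ring
      rw [this]
      exact add_mem (Ideal.mul_mem_left _ _ gB2_mem) hmem2
    · rw [show nfB b c t 0 j k = (Mo 1 (j-b) (k + (b-1)) : MvPolynomial (Fin 3) K) by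
        unfold nfB; rw [if_neg h1, if_neg h2, if_pos h3, if_neg h4]]
      rw [hkey]
      exact Ideal.mul_mem_left _ _ gB2_mem
  by_cases h4 : c ≤ k ∨ (t ≤ j ∧ c - b + 1 ≤ k)
  · rw [show nfB b c t 0 j k = (0 : MvPolynomial (Fin 3) K) by
      unfold nfB; rw [if_neg h1, if_neg h2, if_neg h3, if_pos h4], sub_zero]
    rcases h4 with h4 | ⟨h4, h5⟩
    · exact killB_zc h4
    · exact killB_yz h4 h5
  · rw [nfB_std (Or.inl ⟨rfl, by omega, by omega, by omega⟩), sub_self]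
    exact zero_mem _

lemma nfB_step (hb : 2 ≤ b) (ht2 : t < b) (i j k : ℕ) :
    nfB b c t i (j+b) k = (nfB b c t (i+1) j (k + (b-1)) : MvPolynomial (Fin 3) K) := by
  unfold nfB
  by_cases h1 : 2 ≤ i
  · rw [if_pos h1, if_pos (by omega)]
  by_cases h2 : i = 1
  · subst h2
    rw [if_neg h1, if_pos rfl, if_pos (by omega), if_pos (by omega)]
  have hi0 : i = 0 := by omega
  subst hi0
  rw [if_neg h1, if_neg h2, if_pos (by omega : b ≤ j + b), if_neg (by omega : ¬ (2 ≤ 0 + 1)),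
    if_pos (by omega : 0 + 1 = 1), show j + b - b = j by omega]

lemma NFB_g1 (i j k : ℕ) :
    NFgen (nfB b c t) ((Mo i j k : MvPolynomial (Fin 3) K) * Mo 2 0 0) = 0 := by
  rw [Mo_mul, NFgen_Mo]
  simp only [add_zero]
  unfold nfB
  split_ifs <;> first | rfl | (exfalso; omega)

lemma NFB_g2 (hb : 2 ≤ b) (ht2 : t < b) (i j k : ℕ) :
    NFgen (nfB b c t) ((Mo i j k : MvPolynomial (Fin 3) K) * (Mo 0 b 0 - Mo 1 0 (b-1))) = 0 := by
  rw [mul_sub, map_sub, Mo_mul, Mo_mul, NFgen_Mo, NFgen_Mo]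
  simp only [add_zero]
  rw [nfB_step hb ht2, sub_self]

lemma NFB_g3 (i j k : ℕ) :
    NFgen (nfB b c t) ((Mo i j k : MvPolynomial (Fin 3) K) * Mo 0 0 c) = 0 := by
  rw [Mo_mul, NFgen_Mo]
  simp only [add_zero]
  unfold nfB
  split_ifs <;> first | rfl | (exfalso; omega)

lemma NFB_g4 (i j k : ℕ) :
    NFgen (nfB b c t) ((Mo i j k : MvPolynomial (Fin 3) K) * Mo 1 t 0) = 0 := by
  rw [Mo_mul, NFgen_Mo]
  simp only [add_zero]
  unfold nfB
  split_ifs <;> first | rfl | (exfalso; omega)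

lemma NFB_g5 (i j k : ℕ) :
    NFgen (nfB b c t) ((Mo i j k : MvPolynomial (Fin 3) K) * Mo 0 t (c-b+1)) = 0 := by
  rw [Mo_mul, NFgen_Mo]
  unfold nfB
  split_ifs <;> first | rfl | (exfalso; omega)

lemma NFB_kills (hb : 2 ≤ b) (ht2 : t < b) {p : MvPolynomial (Fin 3) K} (hp : p ∈ IB b c t) :
    NFgen (nfB b c t) p = 0 := by
  unfold IB at hp
  obtain ⟨r1, z1, hz1, rfl⟩ := Ideal.mem_span_insert.mp hp
  obtain ⟨r2, z2, hz2, rfl⟩ := Ideal.mem_span_insert.mp hz1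
  obtain ⟨r3, z3, hz3, rfl⟩ := Ideal.mem_span_insert.mp hz2
  obtain ⟨r4, z4, hz4, rfl⟩ := Ideal.mem_span_insert.mp hz3
  obtain ⟨r5, rfl⟩ := Ideal.mem_span_singleton'.mp hz4
  simp only [map_add]
  rw [NFgen_mul_right_zero _ _ (NFB_g1) r1, NFgen_mul_right_zero _ _ (NFB_g2 hb ht2) r2,
    NFgen_mul_right_zero _ _ (NFB_g3) r3, NFgen_mul_right_zero _ _ (NFB_g4) r4,
    NFgen_mul_right_zero _ _ (NFB_g5) r5]
  simp

lemma L_mul_Mo_B (i j k : ℕ) :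
    (X 1 + X 2 : MvPolynomial (Fin 3) K) * Mo i j k = Mo i (j+1) k + Mo i j (k+1) := by
  have hy : (X 1 : MvPolynomial (Fin 3) K) = Mo 0 1 0 := by rw [Mo_eq]; simp
  have hz : (X 2 : MvPolynomial (Fin 3) K) = Mo 0 0 1 := by rw [Mo_eq]; simp
  rw [add_mul, mul_comm (X 1) (Mo i j k), mul_comm (X 2) (Mo i j k), hy, hz, Mo_mul, Mo_mul]
  simp only [add_zero]

/-- correction term in the key normal-form identity -/
noncomputable def corrB (b c t : ℕ) (u : Fin 3 →₀ ℕ) : MvPolynomial (Fin 3) K :=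
  if u 0 = 0 ∧ u 1 = b - 1 then Mo 0 0 (u 2) * (Mo 0 b 0 - Mo 1 0 (b-1))
  else if u 0 = 1 ∧ u 1 = t - 1 then Mo 0 0 (u 2) * Mo 1 t 0
  else 0

lemma injB_mono (hb : 2 ≤ b) (hbc : b ≤ c) (ht1 : 1 ≤ t) (ht2 : t < b)
    {d : ℕ} (hd : d + 1 ≤ c - b + t) {u : Fin 3 →₀ ℕ}
    (hstd : stdB b c t (u 0) (u 1) (u 2)) (hdeg : u 0 + u 1 + u 2 = d) (cc : K) :
    NFgen (nfB b c t) ((X 1 + X 2) * monomial u cc)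
      = (X 1 + X 2) * monomial u cc - cc • corrB b c t u := by
  have hmo : (monomial u cc : MvPolynomial (Fin 3) K) = cc • Mo (u 0) (u 1) (u 2) := by
    rw [Mo, fe_eq_self, smul_monomial, smul_eq_mul, mul_one]
  rw [hmo, mul_smul_comm, map_smul, L_mul_Mo_B, map_add, NFgen_Mo, NFgen_Mo, ← smul_sub]
  congr 1
  rcases hstd with ⟨h0, h1, h2, h3⟩ | ⟨h0, h1, h2⟩
  · rw [h0]
    by_cases hjb : u 1 + 1 = b
    · have e1 : nfB b c t 0 (u 1 + 1) (u 2) = (Mo 1 0 (u 2 + (b-1)) : MvPolynomial (Fin 3) K) := by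
        unfold nfB
        rw [if_neg (by omega), if_neg (by omega), if_pos (by omega), if_neg (by omega),
          show u 1 + 1 - b = 0 by omega]
      have e2 : nfB b c t 0 (u 1) (u 2 + 1) = (Mo 0 (u 1) (u 2 + 1) : MvPolynomial (Fin 3) K) :=
        nfB_std (Or.inl ⟨rfl, by omega, by omega, by omega⟩)
      rw [e1, e2]
      unfold corrB
      rw [if_pos (show u 0 = 0 ∧ u 1 = b - 1 from ⟨h0, by omega⟩)]
      rw [gB2_identity _ _ (by omega), show (0:ℕ) + b = b by omega, ← hjb]
      ring
    · have e1 : nfB b c t 0 (u 1 + 1) (u 2) = (Mo 0 (u 1 + 1) (u 2) : MvPolynomial (Fin 3) K) :=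
        nfB_std (Or.inl ⟨rfl, by omega, by omega, by omega⟩)
      have e2 : nfB b c t 0 (u 1) (u 2 + 1) = (Mo 0 (u 1) (u 2 + 1) : MvPolynomial (Fin 3) K) :=
        nfB_std (Or.inl ⟨rfl, by omega, by omega, by omega⟩)
      rw [e1, e2]
      unfold corrB
      rw [if_neg (by omega), if_neg (by omega)]
      ring
  · rw [h0]
    by_cases hjt : u 1 + 1 = t
    · have e1 : nfB b c t 1 (u 1 + 1) (u 2) = (0 : MvPolynomial (Fin 3) K) := by
        unfold nfB
        rw [if_neg (by omega), if_pos rfl, if_pos (by omega)]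
      have e2 : nfB b c t 1 (u 1) (u 2 + 1) = (Mo 1 (u 1) (u 2 + 1) : MvPolynomial (Fin 3) K) :=
        nfB_std (Or.inr ⟨rfl, by omega, by omega⟩)
      rw [e1, e2]
      unfold corrB
      rw [if_neg (by omega), if_pos (show u 0 = 1 ∧ u 1 = t - 1 from ⟨h0, by omega⟩)]
      rw [Mo_mul]
      simp only [zero_add, add_zero]
      rw [← hjt]
      ring
    · have e1 : nfB b c t 1 (u 1 + 1) (u 2) = (Mo 1 (u 1 + 1) (u 2) : MvPolynomial (Fin 3) K) :=
        nfB_std (Or.inr ⟨rfl, by omega, by omega⟩)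
      have e2 : nfB b c t 1 (u 1) (u 2 + 1) = (Mo 1 (u 1) (u 2 + 1) : MvPolynomial (Fin 3) K) :=
        nfB_std (Or.inr ⟨rfl, by omega, by omega⟩)
      rw [e1, e2]
      unfold corrB
      rw [if_neg (by omega), if_neg (by omega)]
      ring

/-- polynomials involving only `X 2` -/
def Zonly (p : MvPolynomial (Fin 3) K) : Prop := ∀ v ∈ p.support, v 0 = 0 ∧ v 1 = 0

lemma Zonly_sum {s : Finset (Fin 3 →₀ ℕ)} {g : (Fin 3 →₀ ℕ) → K} :
    Zonly (∑ u ∈ s, g u • (Mo 0 0 (u 2) : MvPolynomial (Fin 3) K)) := by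
  intro vv hvv
  have hne := mem_support_iff.mp hvv
  rw [coeff_sum] at hne
  obtain ⟨u, hu, hcu⟩ := Finset.exists_ne_zero_of_sum_ne_zero hne
  rw [coeff_smul] at hcu
  have hM : coeff vv (Mo 0 0 (u 2) : MvPolynomial (Fin 3) K) ≠ 0 :=
    fun h => hcu (by rw [h, smul_zero])
  rw [coeff_Mo] at hM
  have hfe : fe 0 0 (u 2) = vv := by
    by_contra hne'
    rw [if_neg hne'] at hM
    exact hM rfl
  constructor
  · have := congrArg (fun w : Fin 3 →₀ ℕ => w 0) hfe; simpa using this.symm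
  · have := congrArg (fun w : Fin 3 →₀ ℕ => w 1) hfe; simpa using this.symm

lemma Zonly_fix {F : MvPolynomial (Fin 3) K →ₐ[K] MvPolynomial (Fin 3) K}
    (hF : F (X 2) = X 2) {p : MvPolynomial (Fin 3) K} (hp : Zonly p) : F p = p := by
  conv_lhs => rw [← support_sum_monomial_coeff p]
  conv_rhs => rw [← support_sum_monomial_coeff p]
  rw [map_sum]
  refine Finset.sum_congr rfl fun v hv => ?_
  obtain ⟨h0, h1⟩ := hp v hv
  have hv2 : (monomial v (coeff v p) : MvPolynomial (Fin 3) K) = coeff v p • (X 2)^(v 2) := by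
    rw [monomial_eq_smul_Mo, h0, h1, Mo_eq]
    simp
  rw [hv2, map_smul, map_pow, hF]

lemma injB (hb : 2 ≤ b) (hbc : b ≤ c) (ht1 : 1 ≤ t) (ht2 : t < b)
    {d : ℕ} (hd : d + 1 ≤ c - b + t) :
    ∀ f : MvPolynomial (Fin 3) K, f.IsHomogeneous d →
      (X 1 + X 2) * f ∈ IB b c t → f ∈ IB b c t := by
  intro f hf hLf
  set h := NFgen (nfB b c t) f with hh
  have hfh : f - h ∈ IB b c t := NFgen_sub_self_mem (fun i j k => Mo_sub_nfB_mem hb i j k) f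
  have hLh : (X 1 + X 2) * h ∈ IB b c t := by
    have heq : (X 1 + X 2) * h = (X 1 + X 2) * f - (X 1 + X 2) * (f - h) := by ring
    rw [heq]
    exact sub_mem hLf (Ideal.mul_mem_left _ _ hfh)
  have hsup := NFgen_support (nfB_spec (b := b) (c := c) (t := t) hb) hf
  -- the two correction polynomials
  set w := ∑ u ∈ h.support.filter (fun u => u 0 = 0 ∧ u 1 = b - 1),
    coeff u h • (Mo 0 0 (u 2) : MvPolynomial (Fin 3) K) with hw
  set v := ∑ u ∈ h.support.filter (fun u => u 0 = 1 ∧ u 1 = t - 1),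
    coeff u h • (Mo 0 0 (u 2) : MvPolynomial (Fin 3) K) with hv
  have hkey : NFgen (nfB b c t) ((X 1 + X 2) * h)
      = (X 1 + X 2) * h - (w * (Mo 0 b 0 - Mo 1 0 (b-1)) + v * Mo 1 t 0) := by
    have hexp : (X 1 + X 2) * h = ∑ u ∈ h.support, (X 1 + X 2) * monomial u (coeff u h) := by
      rw [← Finset.mul_sum, support_sum_monomial_coeff]
    have hstep : NFgen (nfB b c t) ((X 1 + X 2) * h)
        = ∑ u ∈ h.support, ((X 1 + X 2) * monomial u (coeff u h)
            - coeff u h • corrB b c t u) := by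
      rw [hexp, map_sum]
      refine Finset.sum_congr rfl fun u hu => ?_
      obtain ⟨hstd, hdeg⟩ := hsup u hu
      exact injB_mono hb hbc ht1 ht2 hd hstd hdeg _
    rw [hstep, Finset.sum_sub_distrib, ← hexp]
    congr 1
    have hterm : ∀ u ∈ h.support, coeff u h • corrB b c t u
        = (if u 0 = 0 ∧ u 1 = b - 1 then coeff u h • (Mo 0 0 (u 2) : MvPolynomial (Fin 3) K)
            else 0) * (Mo 0 b 0 - Mo 1 0 (b-1))
          + (if u 0 = 1 ∧ u 1 = t - 1 then coeff u h • (Mo 0 0 (u 2) : MvPolynomial (Fin 3) K)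
            else 0) * Mo 1 t 0 := by
      intro u _
      unfold corrB
      split_ifs with hc1 hc2 <;> first | (exfalso; omega) | simp [smul_mul_assoc]
    rw [Finset.sum_congr rfl hterm, Finset.sum_add_distrib, ← Finset.sum_mul, ← Finset.sum_mul,
      hw, hv, Finset.sum_filter, Finset.sum_filter]
  have hLh0 : NFgen (nfB b c t) ((X 1 + X 2) * h) = 0 := NFB_kills hb ht2 hLh
  have heq2 : (X 1 + X 2) * h = w * (Mo 0 b 0 - Mo 1 0 (b-1)) + v * Mo 1 t 0 := by
    have := hkey.symm.trans hLh0
    linear_combination this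
  have hZw : Zonly w := hw ▸ Zonly_sum
  have hZv : Zonly v := hv ▸ Zonly_sum
  -- substitution y ↦ -z
  set ψ : MvPolynomial (Fin 3) K →ₐ[K] MvPolynomial (Fin 3) K :=
    aeval ![X 0, -(X 2), X 2] with hψ
  have hψ0 : ψ (X 0) = X 0 := by simp [hψ, aeval_X]
  have hψ1 : ψ (X 1) = -(X 2) := by simp [hψ, aeval_X]
  have hψ2 : ψ (X 2) = X 2 := by simp [hψ, aeval_X]
  have hψg2 : ψ (Mo 0 b 0 - Mo 1 0 (b-1)) = (-(X 2))^b - X 0 * (X 2)^(b-1) := by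
    rw [map_sub, Mo_eq, Mo_eq]
    simp only [map_mul, map_pow, hψ0, hψ1, hψ2, pow_zero, one_mul, mul_one, pow_one]
  have hψg4 : ψ (Mo 1 t 0) = X 0 * (-(X 2))^t := by
    rw [Mo_eq]
    simp only [map_mul, map_pow, hψ0, hψ1, hψ2, pow_zero, one_mul, mul_one, pow_one]
  have hsub : (0 : MvPolynomial (Fin 3) K)
      = w * ((-(X 2))^b - X 0 * (X 2)^(b-1)) + v * (X 0 * (-(X 2))^t) := by
    have := congrArg ψ heq2
    rw [map_mul, map_add, map_add, hψ1, hψ2, neg_add_cancel, zero_mul, map_mul, map_mul,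
      hψg2, hψg4, Zonly_fix hψ2 hZw, Zonly_fix hψ2 hZv] at this
    exact this
  -- substitution x ↦ 0
  set χ : MvPolynomial (Fin 3) K →ₐ[K] MvPolynomial (Fin 3) K :=
    aeval ![0, X 1, X 2] with hχ
  have hχ0 : χ (X 0) = 0 := by simp [hχ, aeval_X]
  have hχ2 : χ (X 2) = X 2 := by simp [hχ, aeval_X]
  have hw0 : w = 0 := by
    have := congrArg χ hsub
    rw [map_zero, map_add, map_mul, map_mul, Zonly_fix hχ2 hZw, Zonly_fix hχ2 hZv,
      map_sub, map_pow, map_neg, hχ2, map_mul, hχ0, zero_mul, sub_zero, map_mul, hχ0,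
      zero_mul, mul_zero, add_zero] at this
    rcases mul_eq_zero.mp this.symm with h' | h'
    · exact h'
    · exact absurd h' (pow_ne_zero _ (neg_ne_zero.mpr (X_ne_zero 2)))
  have hv0 : v = 0 := by
    rw [hw0, zero_mul, zero_add] at hsub
    rcases mul_eq_zero.mp hsub.symm with h' | h'
    · exact h'
    · exact absurd h' (mul_ne_zero (X_ne_zero 0)
        (pow_ne_zero _ (neg_ne_zero.mpr (X_ne_zero 2))))
  have hzero : (X 1 + X 2) * h = 0 := by
    rw [heq2, hw0, hv0, zero_mul, zero_mul, add_zero]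
  have hL : (X 1 + X 2 : MvPolynomial (Fin 3) K) ≠ 0 := fun h0 => by
    simpa using congrArg (eval fun i : Fin 3 => if i = 1 then (1:K) else 0) h0
  have h0 : h = 0 := by
    rcases mul_eq_zero.mp hzero with h' | h'
    · exact absurd h' hL
    · exact h'
  have := hfh
  rw [h0, sub_zero] at this
  exact this

/-! surjectivity for case B -/

lemma surjB_XB (hbc : b ≤ c) (ht1 : 1 ≤ t) (ht2 : t < b) {e : ℕ} (he : c - b + t + 1 ≤ e) :
    ∀ k j : ℕ, 1 + j + k = e →
      ∃ q : MvPolynomial (Fin 3) K, q.IsHomogeneous (e-1) ∧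
        Mo 1 j k - (X 1 + X 2) * q ∈ IB b c t := by
  intro k
  induction k using Nat.strong_induction_on with
  | _ k ih =>
  intro j hdeg
  by_cases hk1 : t ≤ j
  · exact ⟨0, isHomogeneous_zero _ _ _, by rw [mul_zero, sub_zero]; exact killB_xy hk1⟩
  by_cases hk2 : c ≤ k
  · exact ⟨0, isHomogeneous_zero _ _ _, by rw [mul_zero, sub_zero]; exact killB_zc hk2⟩
  · obtain ⟨k', rfl⟩ : ∃ k', k = k' + 1 := ⟨k - 1, by omega⟩
    obtain ⟨q', hq1, hq2⟩ := ih k' (by omega) (j+1) (by omega)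
    refine ⟨Mo 1 j k' - q', (Mo_homog (by omega)).sub hq1, ?_⟩
    have heq : (Mo 1 j (k'+1) : MvPolynomial (Fin 3) K) - (X 1 + X 2) * (Mo 1 j k' - q')
        = -(Mo 1 (j+1) k' - (X 1 + X 2) * q') := by
      rw [mul_sub, L_mul_Mo_B]
      ring
    rw [heq]
    exact neg_mem hq2

lemma surjB_Z1 (hbc : b ≤ c) (ht1 : 1 ≤ t) (ht2 : t < b) {e : ℕ} (he : c - b + t + 1 ≤ e) :
    ∀ s j k : ℕ, k + s = c - b → j + k = e →
      ∃ q : MvPolynomial (Fin 3) K, q.IsHomogeneous (e-1) ∧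
        Mo 0 j k - (X 1 + X 2) * q ∈ IB b c t := by
  intro s
  induction s with
  | zero =>
    intro j k hk hdeg
    obtain ⟨j', rfl⟩ : ∃ j', j = j' + 1 := ⟨j - 1, by omega⟩
    refine ⟨Mo 0 j' k, Mo_homog (by omega), ?_⟩
    have heq : (Mo 0 (j'+1) k : MvPolynomial (Fin 3) K) - (X 1 + X 2) * Mo 0 j' k
        = -(Mo 0 j' (k+1)) := by
      rw [L_mul_Mo_B]
      ring
    rw [heq]
    exact neg_mem (killB_yz (by omega) (by omega))
  | succ s ih =>
    intro j k hk hdeg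
    obtain ⟨j', rfl⟩ : ∃ j', j = j' + 1 := ⟨j - 1, by omega⟩
    obtain ⟨q', hq1, hq2⟩ := ih j' (k+1) (by omega) (by omega)
    refine ⟨Mo 0 j' k - q', (Mo_homog (by omega)).sub hq1, ?_⟩
    have heq : (Mo 0 (j'+1) k : MvPolynomial (Fin 3) K) - (X 1 + X 2) * (Mo 0 j' k - q')
        = -(Mo 0 j' (k+1) - (X 1 + X 2) * q') := by
      rw [mul_sub, L_mul_Mo_B]
      ring
    rw [heq]
    exact neg_mem hq2

lemma surjB_Z2 (hbc : b ≤ c) (ht1 : 1 ≤ t) (ht2 : t < b) {e : ℕ} (he : c - b + t + 1 ≤ e) :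
    ∀ k j : ℕ, j + k = e → c - b + 1 ≤ k →
      ∃ q : MvPolynomial (Fin 3) K, q.IsHomogeneous (e-1) ∧
        Mo 0 j k - (X 1 + X 2) * q ∈ IB b c t := by
  intro k
  induction k using Nat.strong_induction_on with
  | _ k ih =>
  intro j hdeg hk
  by_cases hc1 : c ≤ k
  · exact ⟨0, isHomogeneous_zero _ _ _, by rw [mul_zero, sub_zero]; exact killB_zc hc1⟩
  by_cases hc2 : t ≤ j
  · exact ⟨0, isHomogeneous_zero _ _ _, by rw [mul_zero, sub_zero]; exact killB_yz hc2 hk⟩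
  obtain ⟨k', rfl⟩ : ∃ k', k = k' + 1 := ⟨k - 1, by omega⟩
  have hres : ∃ q' : MvPolynomial (Fin 3) K, q'.IsHomogeneous (e-1) ∧
      Mo 0 (j+1) k' - (X 1 + X 2) * q' ∈ IB b c t := by
    by_cases hk' : c - b + 1 ≤ k'
    · exact ih k' (by omega) (j+1) (by omega) hk'
    · exact surjB_Z1 hbc ht1 ht2 he 0 (j+1) k' (by omega) (by omega)
  obtain ⟨q', hq1, hq2⟩ := hres
  refine ⟨Mo 0 j k' - q', (Mo_homog (by omega)).sub hq1, ?_⟩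
  have heq : (Mo 0 j (k'+1) : MvPolynomial (Fin 3) K) - (X 1 + X 2) * (Mo 0 j k' - q')
      = -(Mo 0 (j+1) k' - (X 1 + X 2) * q') := by
    rw [mul_sub, L_mul_Mo_B]
    ring
  rw [heq]
  exact neg_mem hq2

lemma surjB (hb : 2 ≤ b) (hbc : b ≤ c) (ht1 : 1 ≤ t) (ht2 : t < b)
    {e : ℕ} (he : c - b + t + 1 ≤ e) :
    ∀ i j k : ℕ, i + j + k = e →
      ∃ q : MvPolynomial (Fin 3) K, q.IsHomogeneous (e-1) ∧
        Mo i j k - (X 1 + X 2) * q ∈ IB b c t := by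
  intro i j k hdeg
  by_cases hi2 : 2 ≤ i
  · exact ⟨0, isHomogeneous_zero _ _ _, by rw [mul_zero, sub_zero]; exact killB_x2 hi2⟩
  by_cases hi1 : i = 1
  · subst hi1
    exact surjB_XB hbc ht1 ht2 he k j (by omega)
  have hi0 : i = 0 := by omega
  subst hi0
  by_cases hk : k ≤ c - b
  · exact surjB_Z1 hbc ht1 ht2 he (c - b - k) j k (by omega) (by omega)
  · exact surjB_Z2 hbc ht1 ht2 he k j (by omega) (by omega)

lemma caseB (hb : 2 ≤ b) (hbc : b ≤ c) (ht1 : 1 ≤ t) (ht2 : t < b) :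
    hasWLP K (IB b c t) := by
  refine ⟨X 1 + X 2, (isHomogeneous_X _ _).add (isHomogeneous_X _ _), fun n => ?_⟩
  by_cases hn : n + 1 ≤ c - b + t
  · exact Or.inl (inj_branch (injB hb hbc ht1 ht2 hn))
  · refine Or.inr (surj_branch fun i j k hd => ?_)
    obtain ⟨q, h1, h2⟩ := surjB (K := K) hb hbc ht1 ht2 (e := n+1) (by omega) i j k (by omega)
    exact ⟨q, by simpa using h1, h2⟩

end CaseB


/-! ### transport along a permutation of the variables -/

lemma hX0pow (n : ℕ) : (X 0 : MvPolynomial (Fin 3) K)^n = Mo n 0 0 := by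
  rw [Mo_eq]; simp
lemma hX1pow (n : ℕ) : (X 1 : MvPolynomial (Fin 3) K)^n = Mo 0 n 0 := by
  rw [Mo_eq]; simp
lemma hX2pow (n : ℕ) : (X 2 : MvPolynomial (Fin 3) K)^n = Mo 0 0 n := by
  rw [Mo_eq]; simp
lemma hX01 (i j : ℕ) : (X 0 : MvPolynomial (Fin 3) K)^i * (X 1)^j = Mo i j 0 := by
  rw [Mo_eq]; simp
lemma hX02 (i k : ℕ) : (X 0 : MvPolynomial (Fin 3) K)^i * (X 2)^k = Mo i 0 k := by
  rw [Mo_eq]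
  simp only [pow_zero, mul_one, one_mul]
lemma hX12 (j k : ℕ) : (X 1 : MvPolynomial (Fin 3) K)^j * (X 2)^k = Mo 0 j k := by
  rw [Mo_eq]; simp

lemma rename_swap_Mo (i j k : ℕ) :
    rename ⇑(Equiv.swap (0 : Fin 3) 2) (Mo i j k : MvPolynomial (Fin 3) K) = Mo k j i := by
  rw [Mo_eq, Mo_eq]
  simp only [map_mul, map_pow, rename_X, Equiv.swap_apply_left, Equiv.swap_apply_right]
  rw [Equiv.swap_apply_of_ne_of_ne (by decide) (by decide)]
  ring

lemma hasWLP_rename (e : Fin 3 ≃ Fin 3) {I : Ideal (MvPolynomial (Fin 3) K)}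
    (h : hasWLP K I) : hasWLP K (Ideal.map (rename ⇑e) I) := by
  obtain ⟨L, hL1, hLd⟩ := h
  set J := Ideal.map (rename (R := K) ⇑e) I with hJ
  have hστ : ∀ p : MvPolynomial (Fin 3) K, rename ⇑e (rename ⇑e.symm p) = p := by
    intro p
    rw [rename_rename, Equiv.self_comp_symm, rename_id, AlgHom.id_apply]
  have hsurj : Function.Surjective (rename (R := K) ⇑e) := fun p => ⟨rename ⇑e.symm p, hστ p⟩
  have hinj : Function.Injective (rename (R := K) ⇑e) := rename_injective _ e.injective
  have hmem : ∀ p : MvPolynomial (Fin 3) K, rename ⇑e p ∈ J ↔ p ∈ I := by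
    intro p
    constructor
    · intro hp
      obtain ⟨x, hx, hxe⟩ := (Ideal.mem_map_iff_of_surjective _ hsurj).mp hp
      rwa [← hinj hxe]
    · intro hp
      exact Ideal.mem_map_of_mem _ hp
  have hmkJ : ∀ (n : ℕ) (u : MvPolynomial (Fin 3) K ⧸ J), u ∈ grComponent K J n ↔
      ∃ f, f.IsHomogeneous n ∧ Ideal.Quotient.mk J (rename ⇑e f) = u := by
    intro n u
    rw [mem_grComponent_iff]
    constructor
    · rintro ⟨g, hg, rfl⟩
      exact ⟨rename ⇑e.symm g, hg.rename_isHomogeneous, by rw [hστ]⟩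
    · rintro ⟨f, hf, rfl⟩
      exact ⟨rename ⇑e f, hf.rename_isHomogeneous, rfl⟩
  refine ⟨rename ⇑e L, hL1.rename_isHomogeneous, fun n => ?_⟩
  rcases hLd n with hinjn | hsurn
  · left
    intro u hu v hv he2
    obtain ⟨f, hf, rfl⟩ := (hmkJ n u).mp hu
    obtain ⟨g, hg, rfl⟩ := (hmkJ n v).mp hv
    simp only [← map_mul] at he2
    rw [Ideal.Quotient.mk_eq_mk_iff_sub_mem, ← map_sub, hmem] at he2
    have hfg := hinjn (Ideal.Quotient.mk I f) (mem_grComponent_iff.mpr ⟨f, hf, rfl⟩)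
      (Ideal.Quotient.mk I g) (mem_grComponent_iff.mpr ⟨g, hg, rfl⟩)
      (by rw [← map_mul, ← map_mul, Ideal.Quotient.mk_eq_mk_iff_sub_mem]; exact he2)
    rw [Ideal.Quotient.mk_eq_mk_iff_sub_mem] at hfg
    rw [Ideal.Quotient.mk_eq_mk_iff_sub_mem, ← map_sub]
    exact (hmem _).mpr hfg
  · right
    intro w hw
    obtain ⟨f, hf, rfl⟩ := (hmkJ (n+1) w).mp hw
    obtain ⟨u0, hu0, hu0e⟩ := hsurn (Ideal.Quotient.mk I f) (mem_grComponent_iff.mpr ⟨f, hf, rfl⟩)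
    obtain ⟨g, hg, rfl⟩ := mem_grComponent_iff.mp hu0
    refine ⟨Ideal.Quotient.mk J (rename ⇑e g), (hmkJ n _).mpr ⟨g, hg, rfl⟩, ?_⟩
    rw [← map_mul, Ideal.Quotient.mk_eq_mk_iff_sub_mem] at hu0e
    rw [← map_mul, Ideal.Quotient.mk_eq_mk_iff_sub_mem, ← map_mul, ← map_sub]
    exact (hmem _).mpr hu0e

end WLPAux

open WLPAux in
theorem stmt_1 (K : Type*) [Field K] [CharZero K] (a b c α β γ : ℕ)
    (hα1 : 1 ≤ α) (hα2 : α ≤ a - 1)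
    (hβ1 : 1 ≤ β) (hβ2 : β ≤ b - 1)
    (hγ1 : 1 ≤ γ) (hγ2 : γ ≤ c - 1)
    (hαγ : α + γ = b)
    (habc : a = 2 ∨ b = 2 ∨ c = 2) :
    hasWLP K (Ideal.span {(X 0 : MvPolynomial (Fin 3) K) ^ a,
      X 1 ^ b - X 0 ^ α * X 2 ^ γ, X 2 ^ c,
      X 0 ^ (a - α) * X 1 ^ (b - β), X 1 ^ (b - β) * X 2 ^ (c - γ)}) := by
  rcases habc with ha2 | hb2 | hc2
  · -- a = 2 : case B
    subst ha2
    have hb2 : 2 ≤ b := by omega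
    have hα : α = 1 := by omega
    subst hα
    have hγ : γ = b - 1 := by omega
    subst hγ
    have hbc : b ≤ c := by omega
    rw [show (X 0 : MvPolynomial (Fin 3) K)^2 = Mo 2 0 0 from hX0pow 2,
      show (X 1 : MvPolynomial (Fin 3) K)^b = Mo 0 b 0 from hX1pow b,
      show (X 0 : MvPolynomial (Fin 3) K)^1 * X 2^(b-1) = Mo 1 0 (b-1) from hX02 1 (b-1),
      show (X 2 : MvPolynomial (Fin 3) K)^c = Mo 0 0 c from hX2pow c,
      show (2:ℕ) - 1 = 1 by norm_num,
      show (X 0 : MvPolynomial (Fin 3) K)^1 * X 1^(b-β) = Mo 1 (b-β) 0 from hX01 1 (b-β),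
      show c - (b-1) = c - b + 1 by omega,
      show (X 1 : MvPolynomial (Fin 3) K)^(b-β) * X 2^(c-b+1) = Mo 0 (b-β) (c-b+1) from
        hX12 (b-β) (c-b+1)]
    exact caseB hb2 hbc (by omega) (by omega)
  · -- b = 2 : case A
    subst hb2
    have hα : α = 1 := by omega
    subst hα
    have hγ : γ = 1 := by omega
    subst hγ
    have hβ : β = 1 := by omega
    subst hβ
    have ha2 : 2 ≤ a := by omega
    have hc2 : 2 ≤ c := by omega
    rw [show (X 0 : MvPolynomial (Fin 3) K)^a = Mo a 0 0 from hX0pow a,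
      show (X 1 : MvPolynomial (Fin 3) K)^2 = Mo 0 2 0 from hX1pow 2,
      show (X 0 : MvPolynomial (Fin 3) K)^1 * X 2^1 = Mo 1 0 1 from hX02 1 1,
      show (X 2 : MvPolynomial (Fin 3) K)^c = Mo 0 0 c from hX2pow c,
      show (2:ℕ) - 1 = 1 by norm_num,
      show (X 0 : MvPolynomial (Fin 3) K)^(a-1) * X 1^1 = Mo (a-1) 1 0 from hX01 (a-1) 1,
      show (X 1 : MvPolynomial (Fin 3) K)^1 * X 2^(c-1) = Mo 0 1 (c-1) from hX12 1 (c-1)]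
    rcases le_total a c with hac | hca
    · exact caseA ha2 hc2 hac
    · have h2 := hasWLP_rename (K := K) (Equiv.swap 0 2) (caseA hc2 ha2 hca)
      have h3 : Ideal.map (rename ⇑(Equiv.swap (0:Fin 3) 2)) (IA c a)
          = Ideal.span {(Mo a 0 0 : MvPolynomial (Fin 3) K), Mo 0 2 0 - Mo 1 0 1, Mo 0 0 c,
            Mo (a-1) 1 0, Mo 0 1 (c-1)} := by
        unfold IA
        rw [Ideal.map_span]
        congr 1
        simp only [Set.image_insert_eq, Set.image_singleton, map_sub, rename_swap_Mo]
        ext x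
        simp only [Set.mem_insert_iff, Set.mem_singleton_iff]
        tauto
      rw [← h3]
      exact h2
  · -- c = 2 : case B transported
    subst hc2
    have hγ : γ = 1 := by omega
    subst hγ
    have hb2 : 2 ≤ b := by omega
    have hα : α = b - 1 := by omega
    subst hα
    have hba : b ≤ a := by omega
    rw [show (X 0 : MvPolynomial (Fin 3) K)^a = Mo a 0 0 from hX0pow a,
      show (X 1 : MvPolynomial (Fin 3) K)^b = Mo 0 b 0 from hX1pow b,
      show (X 0 : MvPolynomial (Fin 3) K)^(b-1) * X 2^1 = Mo (b-1) 0 1 from hX02 (b-1) 1,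
      show (X 2 : MvPolynomial (Fin 3) K)^2 = Mo 0 0 2 from hX2pow 2,
      show a - (b-1) = a - b + 1 by omega,
      show (X 0 : MvPolynomial (Fin 3) K)^(a-b+1) * X 1^(b-β) = Mo (a-b+1) (b-β) 0 from
        hX01 (a-b+1) (b-β),
      show (2:ℕ) - 1 = 1 by norm_num,
      show (X 1 : MvPolynomial (Fin 3) K)^(b-β) * X 2^1 = Mo 0 (b-β) 1 from hX12 (b-β) 1]
    have h2 := hasWLP_rename (K := K) (Equiv.swap 0 2)
      (caseB (b := b) (c := a) (t := b-β) hb2 hba (by omega) (by omega))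
    have h3 : Ideal.map (rename ⇑(Equiv.swap (0:Fin 3) 2)) (IB b a (b-β))
        = Ideal.span {(Mo a 0 0 : MvPolynomial (Fin 3) K), Mo 0 b 0 - Mo (b-1) 0 1, Mo 0 0 2,
          Mo (a-b+1) (b-β) 0, Mo 0 (b-β) 1} := by
      unfold IB
      rw [Ideal.map_span]
      congr 1
      simp only [Set.image_insert_eq, Set.image_singleton, map_sub, rename_swap_Mo]
      ext x
      simp only [Set.mem_insert_iff, Set.mem_singleton_iff]
      tauto
    rw [← h3]
    exact h2
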